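/- Let β, β′ ∈ [-1,1], λ ∈ ℂ and R ∈ SO(2). Then λ·(R·(1, iβ)) = (1, iβ′) holds if and only if β = β′ and one of the following is true: (a) β = 1 or β = -1, and there exist x, y ∈ ℝ with x² + y² = 1 such that λ = x + iy and R is the 2×2 matrix with rows (x, -βy), (βy, x); (b) -1 < β < 1 and there exists ε ∈ {1, -1} such that λ = ε and R = ε·I₂. -/
import Mathlib


open Matrix

/-- Characterization of when `λ·(R·(1, iβ)) = (1, iβ′)` for `R ∈ SO(2)`,
`β, β′ ∈ [-1,1]` and `λ ∈ ℂ`. -/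
theorem stmt4 (β β' : ℝ) (hβ : β ∈ Set.Icc (-1 : ℝ) 1) (hβ' : β' ∈ Set.Icc (-1 : ℝ) 1)
    (l : ℂ) (R : Matrix (Fin 2) (Fin 2) ℝ) (hR : Rᵀ * R = 1) (hdet : R.det = 1) :
    l • ((R.map Complex.ofReal) *ᵥ ![1, Complex.I * (β : ℂ)]) = ![1, Complex.I * (β' : ℂ)] ↔
      β = β' ∧
      (((β = 1 ∨ β = -1) ∧ ∃ x y : ℝ, x ^ 2 + y ^ 2 = 1 ∧
          l = (x : ℂ) + Complex.I * (y : ℂ) ∧ R = !![x, -β * y; β * y, x]) ∨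
       (-1 < β ∧ β < 1 ∧ ∃ ε : ℝ, (ε = 1 ∨ ε = -1) ∧ l = (ε : ℂ) ∧
          R = ε • (1 : Matrix (Fin 2) (Fin 2) ℝ))) := by
  obtain ⟨hβl, hβu⟩ := hβ
  obtain ⟨hβ'l, hβ'u⟩ := hβ'
  have h00 := congrFun (congrFun hR 0) 0
  have h01 := congrFun (congrFun hR 0) 1
  have h11 := congrFun (congrFun hR 1) 1
  simp [Matrix.mul_apply, Fin.sum_univ_two, Matrix.one_apply] at h00 h01 h11
  rw [Matrix.det_fin_two] at hdet
  have hc : R 0 1 = -R 1 0 := by nlinarith [sq_nonneg (R 1 1 - R 0 0), sq_nonneg (R 0 1 + R 1 0)]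
  have hd : R 1 1 = R 0 0 := by nlinarith [sq_nonneg (R 1 1 - R 0 0), sq_nonneg (R 0 1 + R 1 0)]
  set a := R 0 0 with ha_def
  set b := R 1 0 with hb_def
  set p := l.re with hp_def
  set q := l.im with hq_def
  have hab : a ^ 2 + b ^ 2 = 1 := by nlinarith
  have key : (l • ((R.map Complex.ofReal) *ᵥ ![1, Complex.I * (β : ℂ)]) = ![1, Complex.I * (β' : ℂ)]) ↔
      (p * a + q * b * β = 1 ∧ q * a - p * b * β = 0 ∧ p * b - q * a * β = 0 ∧ q * b + p * a * β = β') := by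
    rw [funext_iff, Fin.forall_fin_two]
    simp only [Matrix.mulVec, dotProduct, Fin.sum_univ_two, Matrix.map_apply,
      Pi.smul_apply, smul_eq_mul, Matrix.cons_val_zero, Matrix.cons_val_one, Matrix.head_cons,
      Complex.ext_iff, Complex.mul_re, Complex.mul_im, Complex.add_re, Complex.add_im,
      Complex.ofReal_re, Complex.ofReal_im, Complex.I_re, Complex.I_im, Complex.one_re,
      Complex.one_im, mul_one, hc, hd]
    constructor
    · rintro ⟨⟨e1, e2⟩, e3, e4⟩
      exact ⟨by linear_combination e1, by linear_combination e2, by linear_combination e3,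
        by linear_combination e4⟩
    · rintro ⟨e1, e2, e3, e4⟩
      exact ⟨⟨by linear_combination e1, by linear_combination e2⟩, by linear_combination e3,
        by linear_combination e4⟩
  rw [key]
  clear key hR
  constructor
  · rintro ⟨e1, e2, e3, e4⟩
    have common : β ^ 2 = 1 → (β = 1 ∨ β = -1) →
        (β = β' ∧
        (((β = 1 ∨ β = -1) ∧ ∃ x y : ℝ, x ^ 2 + y ^ 2 = 1 ∧
            l = (x : ℂ) + Complex.I * (y : ℂ) ∧ R = !![x, -β * y; β * y, x]) ∨
         (-1 < β ∧ β < 1 ∧ ∃ ε : ℝ, (ε = 1 ∨ ε = -1) ∧ l = (ε : ℂ) ∧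
            R = ε • (1 : Matrix (Fin 2) (Fin 2) ℝ)))) := by
      intro hb2 hor
      have hbb1 : β * β' = 1 := by linear_combination e1 - β * e4 + p * a * hb2
      have hββ' : β = β' := by linear_combination -β * hbb1 + β' * hb2
      have hpq : p ^ 2 + q ^ 2 = 1 := by
        linear_combination (p * a + q * b * β + 1) * e1 + (q * a - p * b * β) * e2 -
          (p ^ 2 + q ^ 2) * hab - (p ^ 2 + q ^ 2) * b ^ 2 * hb2
      have hap : a = p := by linear_combination p * e1 + q * e2 - a * hpq
      have hbq : b = β * q := by linear_combination p * e3 + q * e4 - b * hpq - q * hββ'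
      refine ⟨hββ', Or.inl ⟨hor, p, q, hpq, ?_, ?_⟩⟩
      · apply Complex.ext <;> simp [← hp_def, ← hq_def]
      · ext i j
        fin_cases i <;> fin_cases j <;> simp <;> linarith [hap, hbq, hc, hd]
    rcases eq_or_lt_of_le hβu with h1 | h1
    · exact common (by rw [h1]; norm_num) (Or.inl h1)
    rcases eq_or_lt_of_le hβl with h2 | h2
    · exact common (by rw [← h2]; norm_num) (Or.inr h2.symm)
    · have hβ2 : (0:ℝ) < 1 - β ^ 2 := by nlinarith
      have hpb : p * b = 0 := by
        have h5 : p * b * (1 - β ^ 2) = 0 := by linear_combination e3 + β * e2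
        exact (mul_eq_zero.mp h5).resolve_right (by positivity)
      have haq : a * q = 0 := by linear_combination e2 + β * hpb
      rcases mul_eq_zero.mp hpb with hp0 | hb0
      · exfalso
        have hbq : β * β' = 1 := by
          linear_combination e1 - β * e4 + (a * β ^ 2 - a) * hp0
        nlinarith [mul_nonneg (by linarith : (0:ℝ) ≤ 1 - β) (by linarith : (0:ℝ) ≤ 1 + β'),
          mul_nonneg (by linarith : (0:ℝ) ≤ 1 + β) (by linarith : (0:ℝ) ≤ 1 - β'),
          mul_pos (by linarith : (0:ℝ) < 1 - β) (by linarith : (0:ℝ) < 1 + β)]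
      · have ha2 : a ^ 2 = 1 := by linear_combination hab - b * hb0
        have ha0 : a ≠ 0 := by intro h; rw [h] at ha2; norm_num at ha2
        have hpa1 : p * a = 1 := by linear_combination e1 - β * q * hb0
        have hpa : p = a := by
          have h6 : (p - a) * a = 0 := by linear_combination hpa1 - ha2
          have := (mul_eq_zero.mp h6).resolve_right ha0
          linarith
        have hq0 : q = 0 := (mul_eq_zero.mp haq).resolve_left ha0
        have hββ' : β = β' := by linear_combination e4 - β * hpa1 - q * hb0
        refine ⟨hββ', Or.inr ⟨h2, h1, a, ?_, ?_, ?_⟩⟩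
        · rcases mul_eq_zero.mp (show (a - 1) * (a + 1) = 0 by linear_combination ha2) with h | h
          · exact Or.inl (by linarith)
          · exact Or.inr (by linarith)
        · apply Complex.ext <;> simp [← hp_def, ← hq_def, hpa, hq0]
        · ext i j
          fin_cases i <;> fin_cases j <;>
            simp [Matrix.smul_apply, Matrix.one_apply] <;> linarith [hc, hd, hb0]
  · rintro ⟨rfl, h⟩
    rcases h with ⟨hor, x, y, hxy, hl, hRe⟩ | ⟨_, _, ε, hεor, hl, hRe⟩
    · have hb2 : β ^ 2 = 1 := by rcases hor with h | h <;> rw [h] <;> norm_num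
      have hpx : p = x := by rw [hp_def, hl]; simp
      have hqy : q = y := by rw [hq_def, hl]; simp
      have hax : a = x := by rw [ha_def, hRe]; simp
      have hby : b = β * y := by rw [hb_def, hRe]; simp
      rw [hpx, hqy, hax, hby]
      refine ⟨by linear_combination hxy + y ^ 2 * hb2, by linear_combination -x * y * hb2,
        by ring, by linear_combination β * hxy⟩
    · have hε2 : ε ^ 2 = 1 := by rcases hεor with h | h <;> rw [h] <;> norm_num
      have hpε : p = ε := by rw [hp_def, hl]; simp
      have hq0 : q = 0 := by rw [hq_def, hl]; simp
      have haε : a = ε := by rw [ha_def, hRe]; simp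
      have hb0 : b = 0 := by rw [hb_def, hRe]; simp [Matrix.one_apply]
      rw [hpε, hq0, haε, hb0]
      refine ⟨by linear_combination hε2, by ring, by ring, by linear_combination β * hε2⟩
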